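/- Let A be a permutation of [k] and Γ an A-avoiding permuton with disintegration {Γ_x}. Then for λ^{⊗n}-almost every (x₁,…,x_n) ∈ [0,1]^n with x₁ < … < x_n, the following holds: if ỹ₁,…,ỹ_n ∈ [0,1] are pairwise distinct and Γ_{x_i}({ỹ_i}) > 0 for each i, then the permutation induced by the points (x_i, ỹ_i) avoids the pattern A. -/

import Mathlib

open MeasureTheory Set ProbabilityTheory
open scoped ENNReal

/-- Geometric representations of the pattern `A`. -/
def patternSet {k : ℕ} (A : Equiv.Perm (Fin k)) : Set (Fin k → ℝ × ℝ) :=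
  {f | StrictMono (fun i => (f i).1) ∧ ∀ i j : Fin k, A i < A j ↔ (f i).2 < (f j).2}

section Aux

/-- Truncation of a measurable family of measures to its finite part. -/
noncomputable def truncK (Γx : ℝ → Measure ℝ) (hmeas : Measurable Γx) : Kernel ℝ ℝ where
  toFun x := if Γx x Set.univ < ⊤ then Γx x else 0
  measurable' := by
    apply Measure.measurable_of_measurable_coe
    intro s hs
    have h1 : Measurable fun x => Γx x s := (Measure.measurable_coe hs).comp hmeas
    have h2 : MeasurableSet {x | Γx x Set.univ < ⊤} :=
      measurableSet_lt ((Measure.measurable_coe MeasurableSet.univ).comp hmeas) measurable_const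
    have heq : (fun x => (if Γx x Set.univ < ⊤ then Γx x else 0) s)
        = fun x => if Γx x Set.univ < ⊤ then Γx x s else 0 := by
      funext x; split_ifs <;> simp
    rw [heq]
    exact Measurable.ite h2 h1 measurable_const

lemma truncK_apply (Γx : ℝ → Measure ℝ) (hmeas : Measurable Γx) (x : ℝ) :
    truncK Γx hmeas x = if Γx x Set.univ < ⊤ then Γx x else 0 := rfl

lemma truncK_apply_of {Γx : ℝ → Measure ℝ} (hmeas : Measurable Γx) {x : ℝ}
    (h : Γx x Set.univ < ⊤) : truncK Γx hmeas x = Γx x := by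
  rw [truncK_apply, if_pos h]

lemma truncK_lt_top (Γx : ℝ → Measure ℝ) (hmeas : Measurable Γx) (x : ℝ) :
    truncK Γx hmeas x Set.univ < ⊤ := by
  rw [truncK_apply]
  split_ifs with h
  · exact h
  · simp

lemma truncK_isSFinite (Γx : ℝ → Measure ℝ) (hmeas : Measurable Γx) :
    IsSFiniteKernel (truncK Γx hmeas) := by
  classical
  set κ := truncK Γx hmeas with hκ
  have hmass : Measurable fun x => κ x Set.univ :=
    (Measure.measurable_coe MeasurableSet.univ).comp κ.measurable
  have hs : ∀ j : ℕ, MeasurableSet {x | (j : ℝ≥0∞) ≤ κ x Set.univ ∧ κ x Set.univ < j + 1} :=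
    fun j => hmass measurableSet_Ico
  refine ⟨⟨fun j => Kernel.piecewise (hs j) κ 0, fun j => ?_, ?_⟩⟩
  · refine ⟨⟨(j : ℝ≥0∞) + 1, by simp, fun a => ?_⟩⟩
    rw [Kernel.piecewise_apply']
    split_ifs with h
    · exact le_of_lt h.2
    · simp
  · refine Kernel.ext fun a => Measure.ext fun s hsm => ?_
    rw [Kernel.sum_apply' _ _ hsm]
    have hfin : κ a Set.univ < ⊤ := truncK_lt_top Γx hmeas a
    set j₀ := ⌊(κ a Set.univ).toReal⌋₊ with hj₀
    have hne : κ a Set.univ ≠ ⊤ := hfin.ne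
    have hmem : (j₀ : ℝ≥0∞) ≤ κ a Set.univ ∧ κ a Set.univ < j₀ + 1 := by
      constructor
      · rw [← ENNReal.ofReal_toReal hne, ← ENNReal.ofReal_natCast]
        exact ENNReal.ofReal_le_ofReal (Nat.floor_le ENNReal.toReal_nonneg)
      · rw [← ENNReal.ofReal_toReal hne]
        calc ENNReal.ofReal (κ a Set.univ).toReal
            < ENNReal.ofReal ((j₀ : ℝ) + 1) :=
              (ENNReal.ofReal_lt_ofReal_iff (by positivity)).mpr (Nat.lt_floor_add_one _)
          _ = (j₀ : ℝ≥0∞) + 1 := by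
              rw [ENNReal.ofReal_add (by positivity) zero_le_one]
              simp
    rw [tsum_eq_single j₀ ?_]
    · rw [Kernel.piecewise_apply',
        if_pos (show a ∈ {x | (j₀ : ℝ≥0∞) ≤ κ x Set.univ ∧ κ x Set.univ < j₀ + 1} from hmem)]
    · intro j hj
      rw [Kernel.piecewise_apply', if_neg]
      · simp
      · intro hmem'
        apply hj
        have h1 : (j : ℝ≥0∞) < (j₀ : ℝ≥0∞) + 1 := lt_of_le_of_lt hmem'.1 hmem.2
        have h2 : (j₀ : ℝ≥0∞) < (j : ℝ≥0∞) + 1 := lt_of_le_of_lt hmem.1 hmem'.2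
        have h1' : j < j₀ + 1 := by exact_mod_cast (by push_cast; exact h1 : (j : ℝ≥0∞) < ((j₀ + 1 : ℕ) : ℝ≥0∞))
        have h2' : j₀ < j + 1 := by exact_mod_cast (by push_cast; exact h2 : (j₀ : ℝ≥0∞) < ((j + 1 : ℕ) : ℝ≥0∞))
        omega

/-- Projecting a product of identical probability measures along an injection is
measure preserving. -/
lemma measurePreserving_comp_pi {E : Type*} [MeasurableSpace E] (μ : Measure E)
    [IsProbabilityMeasure μ] {k n : ℕ} (f : Fin k → Fin n) (hf : Function.Injective f) :
    MeasurePreserving (fun z : Fin n → E => z ∘ f)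
      (Measure.pi fun _ => μ) (Measure.pi fun _ => μ) := by
  have hmeasf : Measurable fun z : Fin n → E => z ∘ f :=
    measurable_pi_lambda _ fun i => measurable_pi_apply (f i)
  refine ⟨hmeasf, ?_⟩
  refine (Measure.pi_eq fun t ht => ?_).symm
  rw [Measure.map_apply hmeasf (MeasurableSet.univ_pi ht)]
  have hpre : (fun z : Fin n → E => z ∘ f) ⁻¹' (univ.pi t)
      = univ.pi (fun j => ⋂ (i : Fin k), ⋂ (_ : f i = j), t i) := by
    ext z
    simp only [mem_preimage, mem_pi, mem_univ, forall_true_left, mem_iInter,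
      Function.comp_apply, true_implies]
    constructor
    · rintro h j i rfl; exact h i
    · intro h i; exact h (f i) i rfl
  rw [hpre, Measure.pi_pi]
  have hTf : ∀ i, (⋂ (i' : Fin k), ⋂ (_ : f i' = f i), t i') = t i := by
    intro i
    apply Subset.antisymm
    · intro x hx
      simp only [mem_iInter] at hx
      exact hx i rfl
    · intro x hx
      simp only [mem_iInter]
      intro i' hi'
      cases hf hi'
      exact hx
  calc (∏ j, μ (⋂ (i : Fin k), ⋂ (_ : f i = j), t i))
      = ∏ j ∈ Finset.univ.image f, μ (⋂ (i : Fin k), ⋂ (_ : f i = j), t i) := by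
        refine (Finset.prod_subset (Finset.subset_univ _) fun j _ hj => ?_).symm
        have hempty : (⋂ (i : Fin k), ⋂ (_ : f i = j), t i) = univ := by
          apply eq_univ_of_forall
          intro x
          simp only [mem_iInter]
          intro i hi
          exact absurd (Finset.mem_image.mpr ⟨i, Finset.mem_univ _, hi⟩) hj
        rw [hempty, measure_univ]
    _ = ∏ i, μ (⋂ (i' : Fin k), ⋂ (_ : f i' = f i), t i') :=
        Finset.prod_image (fun a _ b _ h => hf h)
    _ = ∏ i, μ (t i) := Finset.prod_congr rfl fun i _ => by rw [hTf]

lemma patternSet_measurableSet {k : ℕ} (A : Equiv.Perm (Fin k)) :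
    MeasurableSet (patternSet A) := by
  have h1 : ∀ i j : Fin k, MeasurableSet {g : Fin k → ℝ × ℝ | (g i).1 < (g j).1} := fun i j =>
    measurableSet_lt (measurable_fst.comp (measurable_pi_apply i))
      (measurable_fst.comp (measurable_pi_apply j))
  have h2 : ∀ i j : Fin k, MeasurableSet {g : Fin k → ℝ × ℝ | (g i).2 < (g j).2} := fun i j =>
    measurableSet_lt (measurable_snd.comp (measurable_pi_apply i))
      (measurable_snd.comp (measurable_pi_apply j))
  have hset : patternSet A =
      (⋂ (i : Fin k), ⋂ (j : Fin k), ⋂ (_ : i < j), {g : Fin k → ℝ × ℝ | (g i).1 < (g j).1})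
      ∩ ⋂ (i : Fin k), ⋂ (j : Fin k), {g : Fin k → ℝ × ℝ | A i < A j ↔ (g i).2 < (g j).2} := by
    ext g
    simp only [patternSet, mem_setOf_eq, mem_inter_iff, mem_iInter]
    constructor
    · rintro ⟨hs, hiff⟩; exact ⟨fun i j hij => hs hij, hiff⟩
    · rintro ⟨hs, hiff⟩; exact ⟨fun i j hij => hs i j hij, hiff⟩
  rw [hset]
  refine MeasurableSet.inter
    (MeasurableSet.iInter fun i => MeasurableSet.iInter fun j =>
      MeasurableSet.iInter fun _ => h1 i j)
    (MeasurableSet.iInter fun i => MeasurableSet.iInter fun j => ?_)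
  by_cases h : A i < A j
  · have : {g : Fin k → ℝ × ℝ | A i < A j ↔ (g i).2 < (g j).2}
        = {g : Fin k → ℝ × ℝ | (g i).2 < (g j).2} := by
      ext g; simp [h]
    rw [this]; exact h2 i j
  · have : {g : Fin k → ℝ × ℝ | A i < A j ↔ (g i).2 < (g j).2}
        = {g : Fin k → ℝ × ℝ | (g i).2 < (g j).2}ᶜ := by
      ext g; simp [h]
    rw [this]; exact (h2 i j).compl

/-- One-step disintegration of a null set, with a parameter space. -/
lemma fiber_null (Γ : Measure (ℝ × ℝ)) [SFinite Γ] (m : Measure ℝ) [SFinite m] (ν : Kernel ℝ ℝ)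
    [IsSFiniteKernel ν]
    (hdisν : ∀ B : Set (ℝ × ℝ), MeasurableSet B → Γ B = ∫⁻ x, ν x {y | (x, y) ∈ B} ∂m)
    {X : Type} [MeasurableSpace X] (ρ : Measure X) [SFinite ρ]
    {N : Set (X × (ℝ × ℝ))} (hN : MeasurableSet N) (h0 : (ρ.prod Γ) N = 0) :
    ∀ᵐ q ∂(ρ.prod m), ν q.2 {y | (q.1, (q.2, y)) ∈ N} = 0 := by
  have hmap : Measurable fun r : (X × ℝ) × ℝ => (r.1.1, (r.1.2, r.2)) :=
    (measurable_fst.comp measurable_fst).prodMk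
      ((measurable_snd.comp measurable_fst).prodMk measurable_snd)
  have hNset : MeasurableSet {r : (X × ℝ) × ℝ | (r.1.1, (r.1.2, r.2)) ∈ N} := hN.preimage hmap
  have hg : Measurable fun q : X × ℝ => ν q.2 {y | (q.1, (q.2, y)) ∈ N} := by
    have h := Kernel.measurable_kernel_prodMk_left
      (κ := ν.comap Prod.snd measurable_snd) hNset
    simp only [Kernel.comap_apply] at h
    exact h
  rw [ae_iff]
  have hset : MeasurableSet {q : X × ℝ | ¬ ν q.2 {y | (q.1, (q.2, y)) ∈ N} = 0} :=
    (hg (measurableSet_singleton 0)).compl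
  rw [Measure.measure_prod_null hset]
  have h1 := Measure.measure_ae_null_of_prod_null h0
  filter_upwards [h1] with a ha
  simp only [Pi.zero_apply] at ha ⊢
  have hsec : MeasurableSet (Prod.mk a ⁻¹' N) := measurable_prodMk_left hN
  rw [hdisν _ hsec] at ha
  have h2 : ∀ᵐ x ∂m, ν x {y | (a, (x, y)) ∈ N} = 0 :=
    (lintegral_eq_zero_iff (hg.comp measurable_prodMk_left)).mp ha
  exact ae_iff.mp h2

/-- Main inductive claim: a product-null set is avoided by tuples of fiber atoms,
almost surely over the base, with an auxiliary parameter space. -/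
lemma mainClaim (Γ : Measure (ℝ × ℝ)) [IsProbabilityMeasure Γ] (m : Measure ℝ)
    [IsProbabilityMeasure m] (ν : Kernel ℝ ℝ) [IsSFiniteKernel ν]
    (hdisν : ∀ B : Set (ℝ × ℝ), MeasurableSet B → Γ B = ∫⁻ x, ν x {y | (x, y) ∈ B} ∂m) :
    ∀ (kk : ℕ) (X : Type) (_ : MeasurableSpace X) (ρ : Measure X) (_ : SFinite ρ)
      (T : Set (X × (Fin kk → ℝ × ℝ))), MeasurableSet T →
      (ρ.prod (Measure.pi fun _ : Fin kk => Γ)) T = 0 →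
      ∀ᵐ q ∂(ρ.prod (Measure.pi fun _ : Fin kk => m)), ∀ y : Fin kk → ℝ,
        (∀ i, 0 < ν (q.2 i) {y i}) → (q.1, fun i => (q.2 i, y i)) ∉ T := by
  intro kk
  induction kk with
  | zero =>
    intro X mX ρ hρ T hT h0
    have h1 := Measure.measure_ae_null_of_prod_null h0
    have h1' : ∀ᵐ a ∂ρ, (Measure.pi fun _ : Fin 0 => Γ) (Prod.mk a ⁻¹' T) = 0 := by
      filter_upwards [h1] with a ha using ha
    rw [ae_iff]
    refine measure_mono_null (fun q hq => ?_)
      (?_ : (ρ.prod (Measure.pi fun _ : Fin 0 => m))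
        (Prod.fst ⁻¹' {a : X | ¬ (Measure.pi fun _ : Fin 0 => Γ) (Prod.mk a ⁻¹' T) = 0}) = 0)
    · simp only [mem_preimage, mem_setOf_eq]
      intro hzero
      apply hq
      intro y hy hmem
      have huniv : Prod.mk q.1 ⁻¹' T = univ := by
        apply eq_univ_of_forall
        intro v
        have hv : v = fun i => (q.2 i, y i) := Subsingleton.elim _ _
        rw [mem_preimage, hv]
        exact hmem
      rw [huniv] at hzero
      simp at hzero
    · have hAm : MeasurableSet {a : X | ¬ (Measure.pi fun _ : Fin 0 => Γ) (Prod.mk a ⁻¹' T) = 0} :=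
        ((measurable_measure_prodMk_left hT) (measurableSet_singleton 0)).compl
      rw [← Set.prod_univ, Measure.prod_prod]
      rw [ae_iff.mp h1', zero_mul]
  | succ k ih =>
    intro X mX ρ hρ T hT h0
    -- the measurable rearrangement maps
    have hΓmp : MeasurePreserving
        (fun q : X × (Fin (k + 1) → ℝ × ℝ) => ((q.1, q.2 0), fun i => q.2 i.succ))
        (ρ.prod (Measure.pi fun _ : Fin (k + 1) => Γ))
        ((ρ.prod Γ).prod (Measure.pi fun _ : Fin k => Γ)) := by
      have h1 := (MeasurePreserving.id ρ).prod
        (measurePreserving_piFinSuccAbove (fun _ : Fin (k + 1) => Γ) 0)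
      have h2 := MeasurePreserving.symm MeasurableEquiv.prodAssoc
        (measurePreserving_prodAssoc ρ Γ (Measure.pi fun _ : Fin k => Γ))
      have h3 := h2.comp h1
      exact h3
    set T2 : Set ((X × (ℝ × ℝ)) × (Fin k → ℝ × ℝ)) :=
      (fun r : (X × (ℝ × ℝ)) × (Fin k → ℝ × ℝ) =>
        (r.1.1, (Fin.cons r.1.2 r.2 : Fin (k + 1) → ℝ × ℝ))) ⁻¹' T with hT2def
    have hconsm : Measurable (fun r : (X × (ℝ × ℝ)) × (Fin k → ℝ × ℝ) =>
        (r.1.1, (Fin.cons r.1.2 r.2 : Fin (k + 1) → ℝ × ℝ))) := by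
      refine Measurable.prodMk (measurable_fst.comp measurable_fst) ?_
      refine measurable_pi_lambda _ fun j => ?_
      refine Fin.cases ?_ ?_ j
      · simp only [Fin.cons_zero]
        exact measurable_snd.comp measurable_fst
      · intro i
        simp only [Fin.cons_succ]
        exact (measurable_pi_apply i).comp measurable_snd
    have hT2 : MeasurableSet T2 := hT.preimage hconsm
    have h02 : ((ρ.prod Γ).prod (Measure.pi fun _ : Fin k => Γ)) T2 = 0 := by
      rw [← hΓmp.measure_preimage hT2.nullMeasurableSet]
      have hpre : (fun q : X × (Fin (k + 1) → ℝ × ℝ) =>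
          ((q.1, q.2 0), fun i => q.2 i.succ)) ⁻¹' T2 = T := by
        ext q
        simp only [hT2def, mem_preimage]
        rw [show (Fin.cons (q.2 0) (fun i => q.2 i.succ) : Fin (k + 1) → ℝ × ℝ) = q.2
          from Fin.cons_self_tail q.2]
      rw [hpre]
      exact h0
    have H1 := ih (X × (ℝ × ℝ)) inferInstance (ρ.prod Γ) inferInstance T2 hT2 h02
    obtain ⟨B, hBsub, hBm, hB0⟩ := exists_measurable_superset_of_null (ae_iff.mp H1)
    -- rearrange to put the Γ factor last
    have hswapmp : MeasurePreserving
        (fun r : (X × (Fin k → ℝ)) × (ℝ × ℝ) => ((r.1.1, r.2), r.1.2))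
        ((ρ.prod (Measure.pi fun _ : Fin k => m)).prod Γ)
        ((ρ.prod Γ).prod (Measure.pi fun _ : Fin k => m)) := by
      have h1 := measurePreserving_prodAssoc ρ (Measure.pi fun _ : Fin k => m) Γ
      have h2 := (MeasurePreserving.id ρ).prod
        (Measure.measurePreserving_swap (μ := Measure.pi fun _ : Fin k => m) (ν := Γ))
      have h3 := MeasurePreserving.symm MeasurableEquiv.prodAssoc
        (measurePreserving_prodAssoc ρ Γ (Measure.pi fun _ : Fin k => m))
      have h4 := h3.comp (h2.comp h1)
      exact h4
    set B2 : Set ((X × (Fin k → ℝ)) × (ℝ × ℝ)) :=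
      (fun r : (X × (Fin k → ℝ)) × (ℝ × ℝ) => ((r.1.1, r.2), r.1.2)) ⁻¹' B with hB2def
    have hB2m : MeasurableSet B2 := hBm.preimage hswapmp.measurable
    have hB20 : ((ρ.prod (Measure.pi fun _ : Fin k => m)).prod Γ) B2 = 0 := by
      rw [hswapmp.measure_preimage hBm.nullMeasurableSet]
      exact hB0
    have H2 := fiber_null Γ m ν hdisν (ρ.prod (Measure.pi fun _ : Fin k => m)) hB2m hB20
    -- pull back along the final rearrangement
    have hχ : MeasurePreserving
        (fun q : X × (Fin (k + 1) → ℝ) => ((q.1, fun i => q.2 i.succ), q.2 0))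
        (ρ.prod (Measure.pi fun _ : Fin (k + 1) => m))
        ((ρ.prod (Measure.pi fun _ : Fin k => m)).prod m) := by
      have h1 := (MeasurePreserving.id ρ).prod
        (measurePreserving_piFinSuccAbove (fun _ : Fin (k + 1) => m) 0)
      have h2 := (MeasurePreserving.id ρ).prod
        (Measure.measurePreserving_swap (μ := m) (ν := Measure.pi fun _ : Fin k => m))
      have h3 := MeasurePreserving.symm MeasurableEquiv.prodAssoc
        (measurePreserving_prodAssoc ρ (Measure.pi fun _ : Fin k => m) m)
      have h4 := h3.comp (h2.comp h1)
      exact h4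
    have H3 := hχ.quasiMeasurePreserving.tendsto_ae.eventually H2
    filter_upwards [H3] with q hq
    intro y hy hmem
    -- the first atom avoids the bad set B2
    have h00 : ((q.1, fun i => q.2 i.succ), (q.2 0, y 0)) ∉ B2 := by
      intro hc
      have hle : ν (q.2 0) {y 0} ≤ 0 := by
        rw [← hq]
        exact measure_mono (singleton_subset_iff.mpr hc)
      exact absurd hle (hy 0).not_ge
    have hrB : ((q.1, (q.2 0, y 0)), fun i => q.2 i.succ) ∉ B := fun hc => h00 hc
    have hPr : ∀ yr : Fin k → ℝ,
        (∀ i, 0 < ν (q.2 i.succ) {yr i}) →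
        ((q.1, (q.2 0, y 0)), fun i => (q.2 i.succ, yr i)) ∉ T2 :=
      of_not_not (fun hc => hrB (hBsub hc))
    have happly := hPr (fun i => y i.succ) (fun i => hy i.succ)
    apply happly
    show (q.1, (Fin.cons (q.2 0, y 0) (fun i => (q.2 i.succ, y i.succ)) : Fin (k + 1) → ℝ × ℝ)) ∈ T
    have hcons : (Fin.cons (q.2 0, y 0) (fun i => (q.2 i.succ, y i.succ)) : Fin (k + 1) → ℝ × ℝ)
        = fun i => (q.2 i, y i) := by
      funext j
      refine Fin.cases ?_ ?_ j
      · simp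
      · intro i; simp
    rw [hcons]
    exact hmem

end Aux

/-- If `Γ` is an `A`-avoiding permuton with disintegration `{Γx x}`,
then for almost every `x₁ < … < x_n`, any choice of distinct atoms `ty_i` of the
fibers `Γ_{x_i}` induces an `A`-avoiding configuration. -/
theorem stmt13 (k : ℕ) (A : Equiv.Perm (Fin k)) (Γ : Measure (ℝ × ℝ))
    [IsProbabilityMeasure Γ]
    (hmarg : ∀ B : Set ℝ, MeasurableSet B →
      Γ (B ×ˢ univ) = volume (B ∩ Icc 0 1) ∧ Γ (univ ×ˢ B) = volume (B ∩ Icc 0 1))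
    (havoid : Measure.pi (fun _ : Fin k => Γ) (patternSet A) = 0)
    (Γx : ℝ → Measure ℝ) (hmeas : Measurable Γx)
    (hdis : ∀ B : Set (ℝ × ℝ), MeasurableSet B →
      Γ B = ∫⁻ x in Icc (0 : ℝ) 1, Γx x {y | (x, y) ∈ B})
    (n : ℕ) :
    ∀ᵐ x ∂(Measure.pi fun _ : Fin n => volume.restrict (Icc (0 : ℝ) 1)),
      StrictMono x →
        ∀ ty : Fin n → ℝ, Function.Injective ty → (∀ i, 0 < Γx (x i) {ty i}) →
          ¬ ∃ f : Fin k → Fin n, StrictMono f ∧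
              ∀ i j : Fin k, A i < A j ↔ ty (f i) < ty (f j) := by
  classical
  set m : Measure ℝ := volume.restrict (Icc (0 : ℝ) 1) with hm
  haveI : IsProbabilityMeasure m := by
    constructor
    rw [hm, Measure.restrict_apply_univ, Real.volume_Icc]
    norm_num
  haveI := truncK_isSFinite Γx hmeas
  set ν : Kernel ℝ ℝ := truncK Γx hmeas with hν
  -- a.e. finiteness of the fibers
  have hfin : ∀ᵐ x ∂m, Γx x Set.univ < ⊤ := by
    have h := hdis Set.univ MeasurableSet.univ
    have h' : Γ Set.univ = ∫⁻ x, Γx x Set.univ ∂m := by simpa using h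
    refine ae_lt_top ((Measure.measurable_coe MeasurableSet.univ).comp hmeas) ?_
    rw [← h']
    exact measure_ne_top Γ Set.univ
  -- disintegration with the truncated kernel
  have hdisν : ∀ B : Set (ℝ × ℝ), MeasurableSet B →
      Γ B = ∫⁻ x, ν x {y | (x, y) ∈ B} ∂m := by
    intro B hB
    rw [hdis B hB]
    refine lintegral_congr_ae ?_
    filter_upwards [hfin] with x hx
    rw [hν, truncK_apply_of hmeas hx]
  -- apply the main claim at level k
  have h0T : (m.prod (Measure.pi fun _ : Fin k => Γ)) (Prod.snd ⁻¹' patternSet A) = 0 := by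
    have hTeq : (Prod.snd ⁻¹' patternSet A : Set (ℝ × (Fin k → ℝ × ℝ)))
        = (univ : Set ℝ) ×ˢ patternSet A := by
      ext q; simp [Set.mem_prod]
    rw [hTeq, Measure.prod_prod, havoid, mul_zero]
  have Hk := mainClaim Γ m ν hdisν k ℝ inferInstance m inferInstance
    (Prod.snd ⁻¹' patternSet A) ((patternSet_measurableSet A).preimage measurable_snd) h0T
  -- remove the dummy parameter
  obtain ⟨B, hBsub, hBm, hB0⟩ := exists_measurable_superset_of_null (ae_iff.mp Hk)
  have hB0' := Measure.measure_ae_null_of_prod_null hB0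
  have hB0'' : ∀ᵐ a ∂m, (Measure.pi fun _ : Fin k => m) (Prod.mk a ⁻¹' B) = 0 := by
    filter_upwards [hB0'] with a ha using ha
  have hmne : m ≠ 0 := IsProbabilityMeasure.ne_zero m
  haveI : (ae m).NeBot := ae_neBot.mpr hmne
  obtain ⟨a, ha⟩ := hB0''.exists
  have Hk' : ∀ᵐ z ∂(Measure.pi fun _ : Fin k => m), ∀ y : Fin k → ℝ,
      (∀ i, 0 < ν (z i) {y i}) → (fun i => (z i, y i)) ∉ patternSet A := by
    rw [ae_iff]
    refine measure_mono_null (fun z hz => ?_) ha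
    exact hBsub hz
  -- transfer to level n along all strictly monotone maps
  have hall : ∀ᵐ z ∂(Measure.pi fun _ : Fin n => m), ∀ f : Fin k → Fin n, StrictMono f →
      ∀ y : Fin k → ℝ, (∀ i, 0 < ν (z (f i)) {y i}) →
        (fun i => (z (f i), y i)) ∉ patternSet A := by
    rw [ae_all_iff]
    intro f
    by_cases hsm : StrictMono f
    · have Hf := (measurePreserving_comp_pi m f
        hsm.injective).quasiMeasurePreserving.tendsto_ae.eventually Hk'
      exact Hf.mono fun z h _ => h
    · exact Filter.Eventually.of_forall fun z h => absurd h hsm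
  -- a.e. all fibers are finite
  have hfin_n : ∀ᵐ z ∂(Measure.pi fun _ : Fin n => m), ∀ i, Γx (z i) Set.univ < ⊤ := by
    rw [ae_all_iff]
    intro i
    rw [ae_iff]
    refine measure_mono_null (fun z hz => ?_)
      (?_ : (Measure.pi fun _ : Fin n => m)
        (univ.pi fun j => if j = i then {x : ℝ | ¬ Γx x Set.univ < ⊤} else univ) = 0)
    · simp only [mem_pi, mem_univ, true_implies]
      intro j
      by_cases hji : j = i
      · subst hji; simp only [if_pos rfl]; exact hz
      · simp [hji]
    · rw [Measure.pi_pi]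
      refine Finset.prod_eq_zero (Finset.mem_univ i) ?_
      simp only [if_pos rfl]
      exact ae_iff.mp hfin
  -- conclude
  filter_upwards [hall, hfin_n] with z hz hfz
  intro hmono ty _ hatom
  rintro ⟨f, hfm, hiff⟩
  refine hz f hfm (fun i => ty (f i)) (fun i => ?_) ⟨?_, fun i j => hiff i j⟩
  · rw [hν, truncK_apply_of hmeas (hfz (f i))]
    exact hatom (f i)
  · exact hmono.comp hfm
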